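/- KL-divergence form of Policy Averaging. For every f-partial policy π with strictly positive entries (∀ o a, 0 < π o a), the expected KL divergence from the expert satisfies ∑_s μ s * ∑_a πexp s a * Real.log (πexp s a / π̄ (f s) a) ≤ ∑_s μ s * ∑_a πexp s a * Real.log (πexp s a / π (f s) a); that is, the conditional average policy π̄ also minimizes the expected KL divergence between the expert policy and an f-partial student policy. -/

import Mathlib

open Finset

/-- Gibbs' inequality: KL divergence is nonnegative. -/
lemma gibbs_aux {A : Type*} [Fintype A] (p q : A → ℝ)
    (hp : ∀ a, 0 ≤ p a) (hq : ∀ a, 0 < q a)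
    (hpq : ∑ a, p a = ∑ a, q a) :
    0 ≤ ∑ a, p a * Real.log (p a / q a) := by
  have key : ∀ a : A, p a - q a ≤ p a * Real.log (p a / q a) := by
    intro a
    rcases eq_or_lt_of_le (hp a) with h | h
    · rw [← h]
      simp
      linarith [(hq a).le]
    · have hlog : Real.log (q a / p a) ≤ q a / p a - 1 :=
        Real.log_le_sub_one_of_pos (div_pos (hq a) h)
      have hinv : Real.log (p a / q a) = - Real.log (q a / p a) := by
        rw [← Real.log_inv]
        congr 1
        field_simp
      rw [hinv]
      have hqp : q a / p a = q a / p a := rfl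
      have h1 : p a * (-(q a / p a - 1)) = p a - q a := by
        field_simp
        ring
      nlinarith [hlog, h]
  calc (0:ℝ) = ∑ a, (p a - q a) := by rw [Finset.sum_sub_distrib, hpq]; ring
    _ ≤ _ := Finset.sum_le_sum (fun a _ => key a)

/-- **KL-divergence form of Policy Averaging.** The conditional average policy `πbar`
minimizes the expected KL divergence between the expert policy and an `f`-partial
student policy with strictly positive entries. -/
theorem policy_averaging_kl
    {S A O : Type*} [Fintype S] [Fintype A] [Fintype O]
    [Nonempty S] [Nonempty A] [Nonempty O] [DecidableEq O]
    (μ : S → ℝ) (hμ0 : ∀ s, 0 ≤ μ s) (hμ1 : ∑ s, μ s = 1)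
    (f : S → O)
    (πexp : S → A → ℝ)
    (hexp0 : ∀ s a, 0 ≤ πexp s a) (hexp1 : ∀ s, ∑ a, πexp s a = 1)
    (πbar : O → A → ℝ)
    (hbar_pos : ∀ o, 0 < ∑ s ∈ univ.filter (fun s => f s = o), μ s →
      ∀ a, πbar o a =
        (∑ s ∈ univ.filter (fun s => f s = o), μ s * πexp s a) /
          (∑ s ∈ univ.filter (fun s => f s = o), μ s))
    (hbar_zero : ∀ o, (∑ s ∈ univ.filter (fun s => f s = o), μ s) = 0 →
      ∀ a, πbar o a = 1 / (Fintype.card A : ℝ))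
    (π : O → A → ℝ)
    (hπpos : ∀ o a, 0 < π o a)
    (hπsum : ∀ o, ∑ a, π o a = 1) :
    ∑ s, μ s * ∑ a, πexp s a * Real.log (πexp s a / πbar (f s) a) ≤
      ∑ s, μ s * ∑ a, πexp s a * Real.log (πexp s a / π (f s) a) := by
  classical
  set w : O → ℝ := fun o => ∑ s ∈ univ.filter (fun s => f s = o), μ s with hw
  have hw0 : ∀ o, 0 ≤ w o := fun o => Finset.sum_nonneg (fun s _ => hμ0 s)
  -- positivity of πbar at relevant points
  have hbar_pt : ∀ s, 0 < μ s → ∀ a, 0 < πexp s a → 0 < πbar (f s) a := by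
    intro s hs a ha
    have hmem : s ∈ univ.filter (fun t => f t = f s) := by simp
    have hwpos : 0 < w (f s) := lt_of_lt_of_le hs
      (Finset.single_le_sum (fun t _ => hμ0 t) hmem)
    rw [hbar_pos (f s) hwpos a]
    apply div_pos _ hwpos
    exact lt_of_lt_of_le (by positivity)
      (Finset.single_le_sum (fun t _ => mul_nonneg (hμ0 t) (hexp0 t a)) hmem)
  -- split the RHS
  have hsplit : ∀ s, μ s * ∑ a, πexp s a * Real.log (πexp s a / π (f s) a)
      = μ s * ∑ a, πexp s a * Real.log (πexp s a / πbar (f s) a)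
        + μ s * ∑ a, πexp s a * Real.log (πbar (f s) a / π (f s) a) := by
    intro s
    rcases eq_or_lt_of_le (hμ0 s) with h | h
    · rw [← h]; ring
    · rw [← mul_add, ← Finset.sum_add_distrib]
      congr 1
      apply Finset.sum_congr rfl
      intro a _
      rcases eq_or_lt_of_le (hexp0 s a) with he | he
      · rw [← he]; ring
      · have hb := hbar_pt s h a he
        have hq := hπpos (f s) a
        rw [Real.log_div he.ne' hb.ne', Real.log_div he.ne' hq.ne',
          Real.log_div hb.ne' hq.ne']
        ring
  rw [Finset.sum_congr rfl (fun s _ => hsplit s), Finset.sum_add_distrib]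
  have hnn : 0 ≤ ∑ s, μ s * ∑ a, πexp s a * Real.log (πbar (f s) a / π (f s) a) := by
    rw [← Finset.sum_fiberwise univ f
      (fun s => μ s * ∑ a, πexp s a * Real.log (πbar (f s) a / π (f s) a))]
    apply Finset.sum_nonneg
    intro o _
    rcases eq_or_lt_of_le (hw0 o) with hwo | hwo
    · -- fiber has zero mass: every μ s = 0 there
      have hz : ∀ s ∈ univ.filter (fun s => f s = o), μ s = 0 :=
        (Finset.sum_eq_zero_iff_of_nonneg (fun s _ => hμ0 s)).mp hwo.symm
      apply le_of_eq
      symm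
      apply Finset.sum_eq_zero
      intro s hs
      rw [hz s hs, zero_mul]
    · have hrw : ∑ s ∈ univ.filter (fun s => f s = o),
          μ s * ∑ a, πexp s a * Real.log (πbar (f s) a / π (f s) a)
          = ∑ a, (∑ s ∈ univ.filter (fun s => f s = o), μ s * πexp s a)
              * Real.log (πbar o a / π o a) := by
        calc ∑ s ∈ univ.filter (fun s => f s = o),
              μ s * ∑ a, πexp s a * Real.log (πbar (f s) a / π (f s) a)
            = ∑ s ∈ univ.filter (fun s => f s = o),
                ∑ a, μ s * πexp s a * Real.log (πbar o a / π o a) := by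
              apply Finset.sum_congr rfl
              intro s hs
              have hfs : f s = o := (Finset.mem_filter.mp hs).2
              rw [hfs, Finset.mul_sum]
              simp [mul_assoc]
          _ = ∑ a, ∑ s ∈ univ.filter (fun s => f s = o),
                μ s * πexp s a * Real.log (πbar o a / π o a) := Finset.sum_comm
          _ = ∑ a, (∑ s ∈ univ.filter (fun s => f s = o), μ s * πexp s a)
                * Real.log (πbar o a / π o a) := by
              apply Finset.sum_congr rfl
              intro a _
              rw [Finset.sum_mul]
      rw [hrw]
      have hnum : ∀ a, (∑ s ∈ univ.filter (fun s => f s = o), μ s * πexp s a)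
          = w o * πbar o a := by
        intro a
        rw [hbar_pos o hwo a]
        field_simp
        rw [mul_div_assoc, show w o / ∑ s ∈ univ.filter (fun s => f s = o), μ s = 1 from
          div_self hwo.ne', mul_one]
      have hbar_sum : ∑ a, πbar o a = 1 := by
        have h1 : ∑ a, w o * πbar o a = w o := by
          rw [← Finset.sum_congr rfl (fun a _ => hnum a)]
          rw [Finset.sum_comm]
          apply Finset.sum_congr rfl
          intro s _
          rw [← Finset.mul_sum, hexp1 s, mul_one]
        rw [← Finset.mul_sum] at h1
        exact mul_left_cancel₀ hwo.ne' (by rw [h1, mul_one])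
      have hbar_nonneg : ∀ a, 0 ≤ πbar o a := by
        intro a
        rw [hbar_pos o hwo a]
        exact div_nonneg (Finset.sum_nonneg fun s _ =>
          mul_nonneg (hμ0 s) (hexp0 s a)) hwo.le
      calc (0:ℝ) ≤ w o * ∑ a, πbar o a * Real.log (πbar o a / π o a) := by
            apply mul_nonneg hwo.le
            exact gibbs_aux (πbar o) (π o) hbar_nonneg (hπpos o)
              (by rw [hbar_sum, hπsum o])
        _ = _ := by
            rw [Finset.mul_sum]
            apply Finset.sum_congr rfl
            intro a _
            rw [hnum a]
            ring
  linarith
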